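/- Fix Q₁, Q₂ > 0, R_z > 0, n ∈ ℤ, and a point (r, θ) with r > 0, θ ∈ (0, π/2) and f(r,θ) > 0. If X ∈ ℝ⁶ satisfies V♭·X = 0 and there exists λ ∈ ℝ with Ω_{ab}X^b = λ·V♭_a for all indices a, then X is a scalar multiple of V = (1,1,0,0,0,0). In particular, the rotation two-form Ω of the null geodesic congruence tangent to V is non-degenerate on the quotient of the V♭-orthogonal complement by the span of V, at every such point. -/

import Mathlib

open Real Matrix

noncomputable section

/-- Rotation length scale `a = √(Q₁Q₂)/R_z`. -/
def aP (Q₁ Q₂ Rz : ℝ) : ℝ := Real.sqrt (Q₁ * Q₂) / Rz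

/-- Momentum charge `Q_p = a² n (n+1)`. -/
def QpP (Q₁ Q₂ Rz : ℝ) (n : ℤ) : ℝ := (aP Q₁ Q₂ Rz) ^ 2 * (n : ℝ) * ((n : ℝ) + 1)

/-- Charge ratio `η = Q₁Q₂/(Q₁Q₂ + Q₁Q_p + Q₂Q_p)`. -/
def etaP (Q₁ Q₂ Rz : ℝ) (n : ℤ) : ℝ :=
  Q₁ * Q₂ / (Q₁ * Q₂ + Q₁ * QpP Q₁ Q₂ Rz n + Q₂ * QpP Q₁ Q₂ Rz n)

/-- `f(r,θ) = r² + a²η((n+1)cos²θ − n sin²θ)`. -/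
def fP (Q₁ Q₂ Rz : ℝ) (n : ℤ) (r θ : ℝ) : ℝ :=
  r ^ 2 + (aP Q₁ Q₂ Rz) ^ 2 * etaP Q₁ Q₂ Rz n *
    (((n : ℝ) + 1) * Real.cos θ ^ 2 - (n : ℝ) * Real.sin θ ^ 2)

/-- `h = √((1+Q₁/f)(1+Q₂/f))`. -/
def hP (Q₁ Q₂ Rz : ℝ) (n : ℤ) (r θ : ℝ) : ℝ :=
  Real.sqrt ((1 + Q₁ / fP Q₁ Q₂ Rz n r θ) * (1 + Q₂ / fP Q₁ Q₂ Rz n r θ))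

/-- The supersymmetric Killing covector `V♭` of the 3-charge microstate geometry in
coordinates `(t, z, r, θ, ψ, φ)`, with `C = −√(Q₁Q₂)aη`. -/
def Vflat (Q₁ Q₂ Rz : ℝ) (n : ℤ) (r θ : ℝ) : Fin 6 → ℝ :=
  let f := fP Q₁ Q₂ Rz n r θ
  let h := hP Q₁ Q₂ Rz n r θ
  let C := -(Real.sqrt (Q₁ * Q₂) * aP Q₁ Q₂ Rz * etaP Q₁ Q₂ Rz n)
  ![-(1/h), 1/h, 0, 0, C * Real.cos θ ^ 2 / (h * f), C * Real.sin θ ^ 2 / (h * f)]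

/-- The rotation two-form `Ω = dV♭` of the null geodesic congruence tangent to
`V = ∂_t + ∂_z`, as an antisymmetric 6×6 matrix in coordinates `(t, z, r, θ, ψ, φ)`. -/
def Omega3charge (Q₁ Q₂ Rz : ℝ) (n : ℤ) (r θ : ℝ) : Matrix (Fin 6) (Fin 6) ℝ :=
  let a := aP Q₁ Q₂ Rz
  let η := etaP Q₁ Q₂ Rz n
  let f := fP Q₁ Q₂ Rz n r θ
  let h := hP Q₁ Q₂ Rz n r θ
  let C := -(Real.sqrt (Q₁ * Q₂) * a * η)
  let K := ((Q₁ + Q₂) * f + 2 * Q₁ * Q₂) / (h * f) ^ 3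
  let L := (2 * f + Q₁ + Q₂) / (h * f) ^ 3
  let s := Real.sin θ
  let c := Real.cos θ
  let Ω02 := K * r / 2
  let Ω03 := -(K * a ^ 2 * η * (2 * (n : ℝ) + 1) * s * c) / 2
  let Ω24 := -(C * L * r * c ^ 2) / 2
  let Ω25 := -(C * L * r * s ^ 2) / 2
  let Ω34 := -(C * s * c * (2 / (h * f) - a ^ 2 * η * (2 * (n : ℝ) + 1) * L * c ^ 2)) / 2
  let Ω35 := -(C * s * c * (-(2 / (h * f)) - a ^ 2 * η * (2 * (n : ℝ) + 1) * L * s ^ 2)) / 2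
  ![![0, 0, Ω02, Ω03, 0, 0],
    ![0, 0, -Ω02, -Ω03, 0, 0],
    ![-Ω02, Ω02, 0, 0, Ω24, Ω25],
    ![-Ω03, Ω03, 0, 0, Ω34, Ω35],
    ![0, 0, -Ω24, -Ω34, 0, 0],
    ![0, 0, -Ω25, -Ω35, 0, 0]]

set_option maxHeartbeats 2000000 in
/-- Non-degeneracy of the rotation two-form `Ω` of the null congruence tangent to `V`
on the quotient of the `V♭`-orthogonal complement by the span of `V`: any `X` with
`V♭·X = 0` and `Ω·X ∝ V♭` is a multiple of `V`. -/
theorem stmt7 (Q₁ Q₂ Rz : ℝ) (n : ℤ) (r θ : ℝ)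
    (hQ₁ : 0 < Q₁) (hQ₂ : 0 < Q₂) (hRz : 0 < Rz)
    (hr : 0 < r) (hθ : θ ∈ Set.Ioo 0 (π/2)) (hf : 0 < fP Q₁ Q₂ Rz n r θ)
    (X : Fin 6 → ℝ)
    (hX : Vflat Q₁ Q₂ Rz n r θ ⬝ᵥ X = 0)
    (hΩX : ∃ l : ℝ, ∀ a : Fin 6,
      (Omega3charge Q₁ Q₂ Rz n r θ).mulVec X a = l * Vflat Q₁ Q₂ Rz n r θ a) :
    ∃ c : ℝ, X = c • (![1, 1, 0, 0, 0, 0] : Fin 6 → ℝ) := by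
  obtain ⟨l, hl⟩ := hΩX
  have h0 := hl 0
  have h2 := hl ((0:Fin 4).succ.succ)
  have h3 := hl ((0:Fin 3).succ.succ.succ)
  have h4 := hl ((0:Fin 2).succ.succ.succ.succ)
  have h5 := hl ((0:Fin 1).succ.succ.succ.succ.succ)
  simp only [Omega3charge, Vflat, Matrix.mulVec, dotProduct, Fin.sum_univ_succ, Fin.sum_univ_zero, Matrix.cons_val_zero, Matrix.cons_val_succ] at h0 h2 h3 h4 h5 hX
  simp only [show Fin.succ (0:Fin 5) = 1 from rfl, show Fin.succ (Fin.succ (0:Fin 4)) = 2 from rfl, show Fin.succ (Fin.succ (Fin.succ (0:Fin 3))) = 3 from rfl, show Fin.succ (Fin.succ (Fin.succ (Fin.succ (0:Fin 2)))) = 4 from rfl, show Fin.succ (Fin.succ (Fin.succ (Fin.succ (Fin.succ (0:Fin 1))))) = 5 from rfl] at h0 h2 h3 h4 h5 hX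
  set q : ℝ := Real.sqrt (Q₁ * Q₂) with hq
  set A : ℝ := aP Q₁ Q₂ Rz with hA
  set E : ℝ := etaP Q₁ Q₂ Rz n with hE
  set F : ℝ := fP Q₁ Q₂ Rz n r θ with hF
  set H : ℝ := hP Q₁ Q₂ Rz n r θ with hH
  set s : ℝ := Real.sin θ with hs
  set c : ℝ := Real.cos θ with hc
  have hq0 : 0 < q := Real.sqrt_pos.mpr (by positivity)
  have hA0 : 0 < A := by rw [hA, aP]; positivity
  have hQp : 0 ≤ QpP Q₁ Q₂ Rz n := by
    rw [QpP]
    rcases le_or_gt 0 n with hn | hn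
    · have : (0:ℝ) ≤ (n:ℝ) := by exact_mod_cast hn
      positivity
    · have h1 : (n:ℝ) ≤ -1 := by exact_mod_cast (by omega : n ≤ -1)
      have h2 : (n:ℝ) * ((n:ℝ)+1) ≥ 0 := by nlinarith
      nlinarith [sq_nonneg (aP Q₁ Q₂ Rz)]
  have hE0 : 0 < E := by
    rw [hE, etaP]
    have : 0 < Q₁ * Q₂ + Q₁ * QpP Q₁ Q₂ Rz n + Q₂ * QpP Q₁ Q₂ Rz n := by positivity
    positivity
  have hH0 : 0 < H := by
    rw [hH, hP, ← hF]
    have h1 : 0 < 1 + Q₁ / F := by positivity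
    have h2 : 0 < 1 + Q₂ / F := by positivity
    positivity
  have hs0 : 0 < s := by rw [hs]; exact Real.sin_pos_of_pos_of_lt_pi hθ.1 (by linarith [hθ.2, Real.pi_pos])
  have hc0 : 0 < c := by rw [hc]; exact Real.cos_pos_of_mem_Ioo ⟨by linarith [hθ.1, Real.pi_pos], hθ.2⟩
  have hsc : s^2 + c^2 = 1 := by rw [hs, hc]; exact Real.sin_sq_add_cos_sq θ
  have hFne : F ≠ 0 := ne_of_gt hf
  have hHne : H ≠ 0 := ne_of_gt hH0
  field_simp at h0 h2 h3 h4 h5 hX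
  -- derived facts
  have keyW : (2*(H*F)^3*r*(((Q₁+Q₂)*F+2*Q₁*Q₂) + (2*F+Q₁+Q₂)*F)) * (X 1 - X 0) = 0 := by
    linear_combination (2*(H*F)^3)*h2 + (2*(H*F)^3*r*(2*F+Q₁+Q₂))*hX
  have hw : X 1 = X 0 := by
    have := (mul_eq_zero.mp keyW).resolve_left (by positivity)
    linarith
  have key1 : (8*(q*A*E)*(H*F)^9*s*c*r) * (X 4 - X 5) = 0 := by
    linear_combination (4*(H*F)^7)*(r*h3 + s*c*(A^2*E*(2*(n:ℝ)+1))*h2)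
  have h45 : X 4 = X 5 := by
    have := (mul_eq_zero.mp key1).resolve_left (by positivity)
    linarith
  have keyT : (q*A*E*H^3*F) * (c^2 * X 4 + s^2 * X 5) = 0 := by
    linear_combination H^3*F^2*hw - H^3*F*hX
  have keyX4 : (q*A*E*H^3*F) * X 4 = 0 := by
    linear_combination keyT + (q*A*E*H^3*F*s^2)*h45 - (q*A*E*H^3*F*(X 4))*hsc
  have hX4 : X 4 = 0 := (mul_eq_zero.mp keyX4).resolve_left (by positivity)
  have hX5 : X 5 = 0 := by rw [← h45]; exact hX4
  have keyX3 : (4*(q*A*E)*(H*F)^7*s*c) * X 3 = 0 := by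
    linear_combination (-2*(H*F)^5)*(s^2*h4 - c^2*h5) - (4*(q*A*E)*(H*F)^7*s*c*(X 3))*hsc
  have hX3 : X 3 = 0 := (mul_eq_zero.mp keyX3).resolve_left (by positivity)
  rw [hX3] at h0 h4
  have keyX2 : (2*H*(H*F)^4*(q*A*E)*c^2*r*(H*((Q₁+Q₂)*F+2*Q₁*Q₂) + H*F*(2*F+Q₁+Q₂))) * X 2 = 0 := by
    linear_combination (2*H^2*(H*F)^4)*((q*A*E)*c^2*h0 - F*h4)
  have hX2 : X 2 = 0 := (mul_eq_zero.mp keyX2).resolve_left (by positivity)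
  refine ⟨X 0, ?_⟩
  funext i
  fin_cases i <;>
    simp [hw, hX2, hX3, hX4, hX5, Matrix.cons_val_zero, Matrix.cons_val_one, Matrix.head_cons] <;>
    exact Or.inr rfl


end
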